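/- arXiv:1511.00121 — 2 statements merged into one kernel-verified Lean document; each statement's English description precedes it below -/
import Mathlib

section
/- Let F: ℝ × ℝ^d → ℝ^d be continuous and Lipschitz in the second variable with flow Φ_t, let Λ ⊆ ℝ^d, and let t_n → 0. Then the deformation Λ_n := Φ_{t_n}(Λ) with maps τ_n := Φ_{t_n}|_Λ satisfies condition (L1): for every R > 0, sup over λ, λ' ∈ Λ with |λ − λ'| ≤ R of |(τ_n(λ) − τ_n(λ')) − (λ − λ')| tends to 0 as n → ∞. -/
open Filter

private lemma flow_key {d : ℕ}
    (F : ℝ → EuclideanSpace ℝ (Fin d) → EuclideanSpace ℝ (Fin d))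
    (L : NNReal) (hFlip : ∀ t : ℝ, LipschitzWith L (F t))
    (Φ : ℝ → EuclideanSpace ℝ (Fin d) → EuclideanSpace ℝ (Fin d))
    (hΦ0 : ∀ x, Φ 0 x = x)
    (hΦ : ∀ x t, HasDerivAt (fun s => Φ s x) (F t (Φ t x)) t)
    (R : ℝ) (x y : EuclideanSpace ℝ (Fin d)) (hxy : ‖x - y‖ ≤ R)
    (s : ℝ) (hs : 0 ≤ s) :
    ‖Φ s x - Φ s y - (x - y)‖ ≤ R * (Real.exp (L * s) - 1) := by
  have hR : (0 : ℝ) ≤ R := le_trans (norm_nonneg _) hxy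
  set f : ℝ → EuclideanSpace ℝ (Fin d) := fun u => Φ u x - Φ u y - (x - y) with hf
  set f' : ℝ → EuclideanSpace ℝ (Fin d) := fun u => F u (Φ u x) - F u (Φ u y) with hf'
  have hderiv : ∀ u : ℝ, HasDerivAt f (f' u) u := fun u =>
    (((hΦ x u).sub (hΦ y u)).sub_const (x - y))
  have hcont : ContinuousOn f (Set.Icc 0 s) :=
    (fun u _ => (hderiv u).continuousAt.continuousWithinAt)
  have hf0 : ‖f 0‖ ≤ 0 := by simp [hf, hΦ0]
  have bound : ∀ u ∈ Set.Ico (0:ℝ) s, ‖f' u‖ ≤ (L : ℝ) * ‖f u‖ + L * R := by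
    intro u _
    have h1 : ‖f' u‖ ≤ (L : ℝ) * ‖Φ u x - Φ u y‖ := by
      simpa [hf', dist_eq_norm] using (hFlip u).dist_le_mul (Φ u x) (Φ u y)
    have h2 : ‖Φ u x - Φ u y‖ ≤ ‖f u‖ + ‖x - y‖ := by
      have : Φ u x - Φ u y = f u + (x - y) := by simp [hf]
      rw [this]; exact norm_add_le _ _
    calc ‖f' u‖ ≤ (L : ℝ) * (‖f u‖ + ‖x - y‖) :=
          h1.trans (by nlinarith [norm_nonneg (f u), L.coe_nonneg])
      _ ≤ (L : ℝ) * ‖f u‖ + L * R := by nlinarith [L.coe_nonneg]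
  have := norm_le_gronwallBound_of_norm_deriv_right_le hcont
    (fun u _ => (hderiv u).hasDerivWithinAt) hf0 bound s (Set.right_mem_Icc.2 hs)
  rw [sub_zero] at this
  refine this.trans (le_of_eq ?_)
  by_cases hL : (L : ℝ) = 0
  · simp [gronwallBound, hL]
  · rw [gronwallBound_of_K_ne_0 hL]
    field_simp
    ring

/-- Condition (L1) for the deformation `Λ_n = Φ_{t_n}(Λ)` induced by the flow of a Lipschitz
vector field, with `t_n → 0`: relative displacements of pairs of points of `Λ` at distance at
most `R` converge uniformly to the original relative positions. -/
theorem flow_deformation_L1 {d : ℕ}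
    (F : ℝ → EuclideanSpace ℝ (Fin d) → EuclideanSpace ℝ (Fin d))
    (hFcont : Continuous (fun p : ℝ × EuclideanSpace ℝ (Fin d) => F p.1 p.2))
    (L : NNReal) (hFlip : ∀ t : ℝ, LipschitzWith L (F t))
    (Φ : ℝ → EuclideanSpace ℝ (Fin d) → EuclideanSpace ℝ (Fin d))
    (hΦ0 : ∀ x, Φ 0 x = x)
    (hΦ : ∀ x t, HasDerivAt (fun s => Φ s x) (F t (Φ t x)) t)
    (Λ : Set (EuclideanSpace ℝ (Fin d)))
    (t : ℕ → ℝ) (ht : Tendsto t atTop (nhds 0)) :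
    ∀ R > (0 : ℝ), ∀ ε > (0 : ℝ), ∃ N : ℕ, ∀ n ≥ N,
      ∀ lam ∈ Λ, ∀ lam' ∈ Λ, ‖lam - lam'‖ ≤ R →
        ‖(Φ (t n) lam - Φ (t n) lam') - (lam - lam')‖ ≤ ε := by
  intro R hR ε hε
  -- the universal estimate, valid for all real s
  have key : ∀ s : ℝ, ∀ x y : EuclideanSpace ℝ (Fin d), ‖x - y‖ ≤ R →
      ‖Φ s x - Φ s y - (x - y)‖ ≤ R * (Real.exp (L * |s|) - 1) := by
    intro s x y hxy
    rcases le_or_gt 0 s with hs | hs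
    · rw [abs_of_nonneg hs]
      exact flow_key F L hFlip Φ hΦ0 hΦ R x y hxy s hs
    · -- time reversal
      set Ψ : ℝ → EuclideanSpace ℝ (Fin d) → EuclideanSpace ℝ (Fin d) :=
        fun u z => Φ (-u) z with hΨ
      set G : ℝ → EuclideanSpace ℝ (Fin d) → EuclideanSpace ℝ (Fin d) :=
        fun u z => -(F (-u) z) with hG
      have hGlip : ∀ u : ℝ, LipschitzWith L (G u) := by
        intro u z w
        simp only [hG]
        rw [edist_neg_neg]
        exact hFlip (-u) z w
      have hΨderiv : ∀ z u, HasDerivAt (fun v => Ψ v z) (G u (Ψ u z)) u := by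
        intro z u
        have h1 : HasDerivAt (fun v : ℝ => -v) (-1 : ℝ) u := (hasDerivAt_id u).neg
        have := HasDerivAt.scomp (g₁ := fun s => Φ s z) (h := fun v : ℝ => -v) u
          (hΦ z (-u)) h1
        simpa [hΨ, hG, Function.comp_def] using this
      have := flow_key G L hGlip Ψ (by simp [hΨ, hΦ0]) hΨderiv R x y hxy (-s)
        (by linarith)
      simpa [hΨ, abs_of_neg hs] using this
  have htend : Tendsto (fun n => R * (Real.exp (L * |t n|) - 1)) atTop (nhds 0) := by
    have h1 : Tendsto (fun n => (L : ℝ) * |t n|) atTop (nhds 0) := by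
      simpa using (ht.abs.const_mul (L : ℝ))
    have h2 := (Real.continuous_exp.tendsto 0).comp h1
    simp only [Real.exp_zero] at h2
    have h3 := (h2.sub_const 1).const_mul R
    simpa using h3
  obtain ⟨N, hN⟩ := eventually_atTop.1 (htend.eventually (gt_mem_nhds hε))
  exact ⟨N, fun n hn lam _ lam' _ hle =>
    (key (t n) lam lam' hle).trans (hN n hn).le⟩
end

section
/- Let F: ℝ × ℝ^d → ℝ^d be continuous and Lipschitz in the second variable with flow Φ_t, let Λ ⊆ ℝ^d, and let t_n → 0. Then the deformation Λ_n := Φ_{t_n}(Λ) with maps τ_n := Φ_{t_n}|_Λ satisfies condition (L2): for every R > 0 there exist R' > 0 and n_0 ∈ ℕ such that whenever |τ_n(λ) − τ_n(λ')| ≤ R for some n ≥ n_0 and λ, λ' ∈ Λ, then |λ − λ'| ≤ R'. -/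
open Filter

theorem flow_deformation_L2_key {d : ℕ}
    (F : ℝ → EuclideanSpace ℝ (Fin d) → EuclideanSpace ℝ (Fin d))
    (L : NNReal) (hFlip : ∀ t : ℝ, LipschitzWith L (F t))
    (Φ : ℝ → EuclideanSpace ℝ (Fin d) → EuclideanSpace ℝ (Fin d))
    (hΦ0 : ∀ x, Φ 0 x = x)
    (hΦ : ∀ x t, HasDerivAt (fun s => Φ s x) (F t (Φ t x)) t)
    (τ : ℝ) (x y : EuclideanSpace ℝ (Fin d)) :
    ‖x - y‖ ≤ Real.exp (|τ| * L) * ‖Φ τ x - Φ τ y‖ := by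
  set v : ℝ → EuclideanSpace ℝ (Fin d) → EuclideanSpace ℝ (Fin d) :=
    fun s z => (-τ) • F (τ * (1 - s)) z with hv
  have hvlip : ∀ s, LipschitzWith (‖τ‖₊ * L) (v s) := by
    intro s
    intro z w
    simp only [hv, edist_smul₀, nnnorm_neg]
    calc ‖τ‖₊ * edist (F (τ * (1 - s)) z) (F (τ * (1 - s)) w)
        ≤ ‖τ‖₊ * (L * edist z w) := by
          exact mul_le_mul_right (hFlip _ z w) _
      _ = ↑(‖τ‖₊ * L) * edist z w := by push_cast; ring
  have hderiv : ∀ (z : EuclideanSpace ℝ (Fin d)) (s : ℝ),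
      HasDerivAt (fun u => Φ (τ * (1 - u)) z) (v s (Φ (τ * (1 - s)) z)) s := by
    intro z s
    have h1 : HasDerivAt (fun u : ℝ => τ * (1 - u)) (-τ) s := by
      simpa using ((hasDerivAt_const s (1:ℝ)).sub (hasDerivAt_id s)).const_mul τ
    have := (hΦ z (τ * (1 - s))).scomp s h1
    simpa [hv, Function.comp_def] using this
  have key := dist_le_of_trajectories_ODE (v := v) (K := ‖τ‖₊ * L)
    (f := fun s => Φ (τ * (1 - s)) x) (g := fun s => Φ (τ * (1 - s)) y)
    (a := 0) (b := 1) (δ := dist (Φ τ x) (Φ τ y)) hvlip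
    (fun s _ => ((hderiv x s).continuousAt).continuousWithinAt)
    (fun s _ => ((hderiv x s).hasDerivWithinAt))
    (fun s _ => ((hderiv y s).continuousAt).continuousWithinAt)
    (fun s _ => ((hderiv y s).hasDerivWithinAt))
    (by simp)
  have h1 := key 1 (by norm_num)
  simp only [show (1:ℝ) - 1 = 0 by norm_num, mul_zero, hΦ0] at h1
  rw [← dist_eq_norm, ← dist_eq_norm]
  calc dist x y ≤ dist (Φ τ x) (Φ τ y) * Real.exp (↑(‖τ‖₊ * L) * ((1:ℝ) - 0)) := by simpa using h1
    _ = Real.exp (|τ| * L) * dist (Φ τ x) (Φ τ y) := by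
        rw [mul_comm]; norm_num [Real.norm_eq_abs]

/-- Condition (L2) for the deformation `Λ_n = Φ_{t_n}(Λ)` induced by the flow of a Lipschitz
vector field, with `t_n → 0`: for every `R > 0` there are `R' > 0` and `n₀` such that
`‖Φ_{t_n}(λ) - Φ_{t_n}(λ')‖ ≤ R` for some `n ≥ n₀` implies `‖λ - λ'‖ ≤ R'`. -/
theorem flow_deformation_L2 {d : ℕ}
    (F : ℝ → EuclideanSpace ℝ (Fin d) → EuclideanSpace ℝ (Fin d))
    (hFcont : Continuous (fun p : ℝ × EuclideanSpace ℝ (Fin d) => F p.1 p.2))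
    (L : NNReal) (hFlip : ∀ t : ℝ, LipschitzWith L (F t))
    (Φ : ℝ → EuclideanSpace ℝ (Fin d) → EuclideanSpace ℝ (Fin d))
    (hΦ0 : ∀ x, Φ 0 x = x)
    (hΦ : ∀ x t, HasDerivAt (fun s => Φ s x) (F t (Φ t x)) t)
    (Λ : Set (EuclideanSpace ℝ (Fin d)))
    (t : ℕ → ℝ) (ht : Tendsto t atTop (nhds 0)) :
    ∀ R > (0 : ℝ), ∃ R' > (0 : ℝ), ∃ n₀ : ℕ, ∀ n ≥ n₀,
      ∀ lam ∈ Λ, ∀ lam' ∈ Λ, ‖Φ (t n) lam - Φ (t n) lam'‖ ≤ R → ‖lam - lam'‖ ≤ R' := by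
  intro R hR
  refine ⟨R * Real.exp L, by positivity, ?_⟩
  have hsmall : ∀ᶠ n in atTop, |t n| ≤ 1 := by
    have := Metric.tendsto_nhds.mp ht 1 one_pos
    filter_upwards [this] with n hn
    simpa [Real.dist_eq] using hn.le
  obtain ⟨n₀, hn₀⟩ := eventually_atTop.mp hsmall
  refine ⟨n₀, fun n hn lam _ lam' _ hRle => ?_⟩
  have key := flow_deformation_L2_key F L hFlip Φ hΦ0 hΦ (t n) lam lam'
  calc ‖lam - lam'‖ ≤ Real.exp (|t n| * L) * ‖Φ (t n) lam - Φ (t n) lam'‖ := key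
    _ ≤ Real.exp L * R := by
        apply mul_le_mul ?_ hRle (norm_nonneg _) (Real.exp_pos _).le
        apply Real.exp_le_exp.mpr
        calc |t n| * L ≤ 1 * L := by
              apply mul_le_mul_of_nonneg_right (hn₀ n hn) L.2
          _ = L := one_mul _
    _ = R * Real.exp L := mul_comm _ _
end
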